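/- If β = λ and λ ≠ 1/2, then the ideals of B'(λ,λ) are exactly the five subspaces: {0}, span{ab}, span{b, ab}, span{a, b, ab}, and B'(λ,λ) itself; in particular they form a chain under inclusion. -/

import Mathlib

/-- The multiplication of the generalized ABO-blood type algebra `B'(l, β)` on `ℝ⁴`,
with ordered basis `o = e₀`, `a = e₁`, `b = e₂`, `ab = e₃`, determined by bilinearity,
commutativity and: `o∘o = o`, `o∘a = l•a`, `o∘b = l•b`, `a∘a = a`, `b∘b = b`,
`a∘b = ((l-β)/l)•a + ((l+β-1)/l)•b + ab`, `o∘ab = a∘ab = b∘ab = ab∘ab = 0`. -/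
noncomputable def Bmul (l β : ℝ) (x y : Fin 4 → ℝ) : Fin 4 → ℝ :=
  ![x 0 * y 0,
    l * (x 0 * y 1 + x 1 * y 0) + x 1 * y 1 + (l - β) / l * (x 1 * y 2 + x 2 * y 1),
    l * (x 0 * y 2 + x 2 * y 0) + x 2 * y 2 + (l + β - 1) / l * (x 1 * y 2 + x 2 * y 1),
    x 1 * y 2 + x 2 * y 1]

/-- The basis vector `o`. -/
noncomputable def vo : Fin 4 → ℝ := ![1, 0, 0, 0]
/-- The basis vector `a`. -/
noncomputable def va : Fin 4 → ℝ := ![0, 1, 0, 0]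
/-- The basis vector `b`. -/
noncomputable def vb : Fin 4 → ℝ := ![0, 0, 1, 0]
/-- The basis vector `ab`. -/
noncomputable def vab : Fin 4 → ℝ := ![0, 0, 0, 1]

/-- A linear subspace `I` is an ideal of `B'(l, β)` if `x ∘ y ∈ I` whenever `y ∈ I`. -/
def IsIdeal (l β : ℝ) (I : Submodule ℝ (Fin 4 → ℝ)) : Prop :=
  ∀ x y : Fin 4 → ℝ, y ∈ I → Bmul l β x y ∈ I

lemma mem_spanab {x : Fin 4 → ℝ} :
    x ∈ Submodule.span ℝ ({vab} : Set (Fin 4 → ℝ)) ↔ x 0 = 0 ∧ x 1 = 0 ∧ x 2 = 0 := by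
  constructor
  · intro hx
    rw [Submodule.mem_span_singleton] at hx
    obtain ⟨c, rfl⟩ := hx
    simp [vab]
  · rintro ⟨h0, h1, h2⟩
    rw [Submodule.mem_span_singleton]
    exact ⟨x 3, by funext i; fin_cases i <;> simp [vab, h0, h1, h2]⟩

lemma mem_spanb {x : Fin 4 → ℝ} :
    x ∈ Submodule.span ℝ ({vb, vab} : Set (Fin 4 → ℝ)) ↔ x 0 = 0 ∧ x 1 = 0 := by
  constructor
  · intro hx
    induction hx using Submodule.span_induction with
    | mem y hy => rcases hy with rfl | rfl <;> simp [vb, vab]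
    | zero => simp
    | add y z _ _ hy hz => exact ⟨by simp [hy.1, hz.1], by simp [hy.2, hz.2]⟩
    | smul c y _ hy => exact ⟨by simp [hy.1], by simp [hy.2]⟩
  · rintro ⟨h0, h1⟩
    have : x = x 2 • vb + x 3 • vab := by
      funext i; fin_cases i <;> simp [vb, vab, h0, h1]
    rw [this]
    exact Submodule.add_mem _
      (Submodule.smul_mem _ _ (Submodule.subset_span (by simp)))
      (Submodule.smul_mem _ _ (Submodule.subset_span (by simp)))

lemma mem_spana {x : Fin 4 → ℝ} :
    x ∈ Submodule.span ℝ ({va, vb, vab} : Set (Fin 4 → ℝ)) ↔ x 0 = 0 := by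
  constructor
  · intro hx
    induction hx using Submodule.span_induction with
    | mem y hy => rcases hy with rfl | rfl | rfl <;> simp [va, vb, vab]
    | zero => simp
    | add y z _ _ hy hz => simp [hy, hz]
    | smul c y _ hy => simp [hy]
  · intro h0
    have : x = x 1 • va + x 2 • vb + x 3 • vab := by
      funext i; fin_cases i <;> simp [va, vb, vab, h0]
    rw [this]
    exact Submodule.add_mem _ (Submodule.add_mem _
      (Submodule.smul_mem _ _ (Submodule.subset_span (by simp)))
      (Submodule.smul_mem _ _ (Submodule.subset_span (by simp))))
      (Submodule.smul_mem _ _ (Submodule.subset_span (by simp)))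

/-- Case: the ideal contains an element with nonzero `o`-coordinate. -/
lemma case_top (l : ℝ) (hl0 : 0 < l) (hl1 : l < 1)
    (I : Submodule ℝ (Fin 4 → ℝ)) (hI : IsIdeal l l I)
    (y : Fin 4 → ℝ) (hy : y ∈ I) (hy0 : y 0 ≠ 0) : I = ⊤ := by
  have hln : l ≠ 0 := hl0.ne'
  have hl1' : (1 : ℝ) - l ≠ 0 := by linarith
  have hz : Bmul l l vo y ∈ I := hI vo y hy
  have hw : Bmul l l vo (Bmul l l vo y) ∈ I := hI vo _ hz
  have hvo : vo ∈ I := by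
    have heq : vo = ((1 - l) * y 0)⁻¹ • (Bmul l l vo (Bmul l l vo y) - l • Bmul l l vo y) := by
      funext i; fin_cases i <;>
        simp [Bmul, vo] <;> field_simp <;> ring
    rw [heq]
    exact Submodule.smul_mem _ _ (Submodule.sub_mem _ hw (Submodule.smul_mem _ _ hz))
  have hva : va ∈ I := by
    have heq : va = l⁻¹ • Bmul l l va vo := by
      funext i; fin_cases i <;> simp [Bmul, vo, va] <;> field_simp
    rw [heq]; exact Submodule.smul_mem _ _ (hI va vo hvo)
  have hvb : vb ∈ I := by
    have heq : vb = l⁻¹ • Bmul l l vb vo := by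
      funext i; fin_cases i <;> simp [Bmul, vo, vb] <;> field_simp
    rw [heq]; exact Submodule.smul_mem _ _ (hI vb vo hvo)
  have hvab : vab ∈ I := by
    have heq : vab = Bmul l l va vb - ((2 * l - 1) / l) • vb := by
      funext i; fin_cases i <;> simp [Bmul, va, vb, vab] <;> field_simp <;> ring
    rw [heq]; exact Submodule.sub_mem _ (hI va vb hvb) (Submodule.smul_mem _ _ hvb)
  rw [eq_top_iff]
  intro x _
  have hx : x = x 0 • vo + x 1 • va + x 2 • vb + x 3 • vab := by
    funext i; fin_cases i <;> simp [vo, va, vb, vab]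
  rw [hx]
  exact Submodule.add_mem _ (Submodule.add_mem _ (Submodule.add_mem _
    (Submodule.smul_mem _ _ hvo) (Submodule.smul_mem _ _ hva))
    (Submodule.smul_mem _ _ hvb)) (Submodule.smul_mem _ _ hvab)

/-- Case: the ideal contains an element with `o`-coordinate zero but nonzero `a`-coordinate. -/
lemma case_a (l : ℝ) (hl0 : 0 < l) (hl1 : l < 1) (hl : l ≠ 1/2)
    (I : Submodule ℝ (Fin 4 → ℝ)) (hI : IsIdeal l l I)
    (y : Fin 4 → ℝ) (hy : y ∈ I) (hy0 : y 0 = 0) (hy1 : y 1 ≠ 0) :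
    va ∈ I ∧ vb ∈ I ∧ vab ∈ I := by
  have hln : l ≠ 0 := hl0.ne'
  have hl1' : l - 1 ≠ 0 := by intro h; nlinarith
  have hμ : 2 * l - 1 ≠ 0 := by
    intro h; apply hl; linarith
  -- u = (0, y1, y2, 0)
  have hu : (fun i => (![0, y 1, y 2, 0] : Fin 4 → ℝ) i) ∈ I := by
    have heq : (fun i => (![0, y 1, y 2, 0] : Fin 4 → ℝ) i) = l⁻¹ • Bmul l l vo y := by
      funext i; fin_cases i <;> simp [Bmul, vo, hy0] <;> field_simp
    rw [heq]; exact Submodule.smul_mem _ _ (hI vo y hy)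
  set u : Fin 4 → ℝ := fun i => (![0, y 1, y 2, 0] : Fin 4 → ℝ) i with hudef
  -- d = Bmul va u - u = (0, 0, (μ-1) y2, y2)
  have hd : Bmul l l va u - u ∈ I := Submodule.sub_mem _ (hI va u hu) hu
  by_cases hy2 : y 2 = 0
  · -- u = y1 • va
    have hva : va ∈ I := by
      have heq : va = (y 1)⁻¹ • u := by
        funext i; fin_cases i <;> simp [va, hudef, hy2] <;> field_simp
      rw [heq]; exact Submodule.smul_mem _ _ hu
    -- g = Bmul vb va = (0,0,μ,1)
    have hg : Bmul l l vb va ∈ I := hI vb va hva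
    have hvb : vb ∈ I := by
      have heq : vb = (l * ((2*l-1)/l))⁻¹ • Bmul l l vo (Bmul l l vb va) := by
        funext i; fin_cases i <;> simp [Bmul, vo, va, vb] <;> (try field_simp) <;> (try ring) <;> (try tauto)
        have h' : -1 + l * 2 ≠ 0 := by intro h; apply hμ; linarith
        field_simp
        ring
      rw [heq]; exact Submodule.smul_mem _ _ (hI vo _ hg)
    have hvab : vab ∈ I := by
      have heq : vab = Bmul l l vb va - ((2 * l - 1) / l) • vb := by
        funext i; fin_cases i <;> simp [Bmul, va, vb, vab] <;> field_simp <;> ring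
      rw [heq]; exact Submodule.sub_mem _ hg (Submodule.smul_mem _ _ hvb)
    exact ⟨hva, hvb, hvab⟩
  · -- e = Bmul vo d = (0,0,l(μ-1)y2,0), μ - 1 = (l-1)/l ≠ 0
    have he : Bmul l l vo (Bmul l l va u - u) ∈ I := hI vo _ hd
    have hvb : vb ∈ I := by
      have heq : vb = (l * ((l - 1)/l) * y 2)⁻¹ • Bmul l l vo (Bmul l l va u - u) := by
        funext i; fin_cases i <;> simp [Bmul, vo, va, vb, hudef] <;> (try field_simp) <;> (try ring) <;> (try tauto)
      rw [heq]; exact Submodule.smul_mem _ _ he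
    have hvab : vab ∈ I := by
      have heq : vab = (y 2)⁻¹ • ((Bmul l l va u - u) - (((l-1)/l) * y 2) • vb) := by
        funext i; fin_cases i <;> simp [Bmul, va, vb, vab, hudef] <;> (try field_simp) <;> (try ring) <;> (try tauto)
      rw [heq]
      exact Submodule.smul_mem _ _ (Submodule.sub_mem _ hd (Submodule.smul_mem _ _ hvb))
    have hva : va ∈ I := by
      have heq : va = (y 1)⁻¹ • (u - y 2 • vb) := by
        funext i; fin_cases i <;> simp [va, vb, hudef] <;> (try field_simp) <;> (try ring) <;> (try tauto)
      rw [heq]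
      exact Submodule.smul_mem _ _ (Submodule.sub_mem _ hu (Submodule.smul_mem _ _ hvb))
    exact ⟨hva, hvb, hvab⟩

/-- Case: the ideal contains an element with `o,a`-coordinates zero, nonzero `b`-coordinate. -/
lemma case_b (l : ℝ) (hl0 : 0 < l) (hl1 : l < 1)
    (I : Submodule ℝ (Fin 4 → ℝ)) (hI : IsIdeal l l I)
    (y : Fin 4 → ℝ) (hy : y ∈ I) (hy0 : y 0 = 0) (hy1 : y 1 = 0) (hy2 : y 2 ≠ 0) :
    vb ∈ I ∧ vab ∈ I := by
  have hln : l ≠ 0 := hl0.ne'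
  have hvb : vb ∈ I := by
    have heq : vb = (l * y 2)⁻¹ • Bmul l l vo y := by
      funext i; fin_cases i <;> simp [Bmul, vo, vb, hy0, hy1] <;> (try field_simp) <;> (try ring) <;> (try tauto)
    rw [heq]; exact Submodule.smul_mem _ _ (hI vo y hy)
  have hvab : vab ∈ I := by
    have heq : vab = Bmul l l va vb - ((2 * l - 1) / l) • vb := by
      funext i; fin_cases i <;> simp [Bmul, va, vb, vab] <;> field_simp <;> ring
    rw [heq]; exact Submodule.sub_mem _ (hI va vb hvb) (Submodule.smul_mem _ _ hvb)
  exact ⟨hvb, hvab⟩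

/-- If `β = l` and `l ≠ 1/2`, the ideals of `B'(l, l)` are exactly `{0}`, `span {ab}`,
`span {b, ab}`, `span {a, b, ab}` and the whole algebra; in particular they form a chain
under inclusion. -/
theorem stmt_12 (l β : ℝ) (hl0 : 0 < l) (hl1 : l < 1) (hβ0 : 0 < β) (hβ1 : β < 1)
    (hβ : β = l) (hl : l ≠ 1 / 2) :
    (∀ I : Submodule ℝ (Fin 4 → ℝ),
      IsIdeal l β I ↔
        (I = ⊥ ∨ I = Submodule.span ℝ ({vab} : Set (Fin 4 → ℝ)) ∨
         I = Submodule.span ℝ ({vb, vab} : Set (Fin 4 → ℝ)) ∨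
         I = Submodule.span ℝ ({va, vb, vab} : Set (Fin 4 → ℝ)) ∨ I = ⊤)) ∧
    (∀ I J : Submodule ℝ (Fin 4 → ℝ), IsIdeal l β I → IsIdeal l β J → I ≤ J ∨ J ≤ I) := by
  subst β
  have hln : l ≠ 0 := hl0.ne'
  have key : ∀ I : Submodule ℝ (Fin 4 → ℝ),
      IsIdeal l l I ↔
        (I = ⊥ ∨ I = Submodule.span ℝ ({vab} : Set (Fin 4 → ℝ)) ∨
         I = Submodule.span ℝ ({vb, vab} : Set (Fin 4 → ℝ)) ∨
         I = Submodule.span ℝ ({va, vb, vab} : Set (Fin 4 → ℝ)) ∨ I = ⊤) := by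
    intro I
    constructor
    · intro hI
      by_cases hA : ∃ y ∈ I, y 0 ≠ 0
      · obtain ⟨y, hy, hy0⟩ := hA
        exact Or.inr (Or.inr (Or.inr (Or.inr (case_top l hl0 hl1 I hI y hy hy0))))
      push_neg at hA
      by_cases hB : ∃ y ∈ I, y 1 ≠ 0
      · obtain ⟨y, hy, hy1⟩ := hB
        obtain ⟨hva, hvb, hvab⟩ := case_a l hl0 hl1 hl I hI y hy (hA y hy) hy1
        refine Or.inr (Or.inr (Or.inr (Or.inl (le_antisymm ?_ ?_))))
        · intro x hx; exact mem_spana.mpr (hA x hx)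
        · rw [Submodule.span_le]
          rintro x (rfl | rfl | rfl) <;> assumption
      push_neg at hB
      by_cases hC : ∃ y ∈ I, y 2 ≠ 0
      · obtain ⟨y, hy, hy2⟩ := hC
        obtain ⟨hvb, hvab⟩ := case_b l hl0 hl1 I hI y hy (hA y hy) (hB y hy) hy2
        refine Or.inr (Or.inr (Or.inl (le_antisymm ?_ ?_)))
        · intro x hx; exact mem_spanb.mpr ⟨hA x hx, hB x hx⟩
        · rw [Submodule.span_le]
          rintro x (rfl | rfl) <;> assumption
      push_neg at hC
      by_cases hD : ∃ y ∈ I, y 3 ≠ 0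
      · obtain ⟨y, hy, hy3⟩ := hD
        have hvab : vab ∈ I := by
          have heq : vab = (y 3)⁻¹ • y := by
            funext i; fin_cases i <;>
              simp [vab, hA y hy, hB y hy, hC y hy] <;> field_simp
          rw [heq]; exact Submodule.smul_mem _ _ hy
        refine Or.inr (Or.inl (le_antisymm ?_ ?_))
        · intro x hx; exact mem_spanab.mpr ⟨hA x hx, hB x hx, hC x hx⟩
        · rw [Submodule.span_le]; rintro x rfl; exact hvab
      push_neg at hD
      refine Or.inl (le_bot_iff.mp ?_)
      intro x hx
      have : x = 0 := by
        funext i; fin_cases i <;>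
          simp [hA x hx, hB x hx, hC x hx, hD x hx]
      simp [this]
    · rintro (rfl | rfl | rfl | rfl | rfl)
      · intro x y hy
        simp only [Submodule.mem_bot] at hy ⊢
        subst hy
        funext i; fin_cases i <;> simp [Bmul]
      · intro x y hy
        obtain ⟨h0, h1, h2⟩ := mem_spanab.mp hy
        have : Bmul l l x y = 0 := by
          funext i; fin_cases i <;> simp [Bmul, h0, h1, h2]
        rw [this]; exact Submodule.zero_mem _
      · intro x y hy
        obtain ⟨h0, h1⟩ := mem_spanb.mp hy
        refine mem_spanb.mpr ⟨?_, ?_⟩ <;> simp [Bmul, h0, h1]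
      · intro x y hy
        have h0 := mem_spana.mp hy
        refine mem_spana.mpr ?_
        simp [Bmul, h0]
      · intro x y _; trivial
  refine ⟨key, ?_⟩
  intro I J hI hJ
  have le12 : Submodule.span ℝ ({vab} : Set (Fin 4 → ℝ)) ≤
      Submodule.span ℝ ({vb, vab} : Set (Fin 4 → ℝ)) :=
    Submodule.span_mono (Set.subset_insert _ _)
  have le23 : Submodule.span ℝ ({vb, vab} : Set (Fin 4 → ℝ)) ≤
      Submodule.span ℝ ({va, vb, vab} : Set (Fin 4 → ℝ)) :=
    Submodule.span_mono (Set.subset_insert _ _)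
  have le13 := le12.trans le23
  rcases (key I).mp hI with rfl | rfl | rfl | rfl | rfl <;>
    rcases (key J).mp hJ with rfl | rfl | rfl | rfl | rfl <;>
    first
      | exact Or.inl (le_refl _)
      | exact Or.inl bot_le
      | exact Or.inl le_top
      | exact Or.inl le12
      | exact Or.inl le23
      | exact Or.inl le13
      | exact Or.inr bot_le
      | exact Or.inr le_top
      | exact Or.inr le12
      | exact Or.inr le23
      | exact Or.inr le13
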